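/- Let n ≥ 3 be an integer and let C be the cycle graph with vertex set Z/2nZ in which i and i+1 are adjacent for every i. A set S of vertices of C is maximal (with respect to inclusion) among vertex sets containing no independent set of size n − 1 if and only if S is a union of n − 2 pairwise vertex-disjoint edges of C. In particular, every such maximal set has exactly 2n − 4 elements. -/

import Mathlib

/-- `T` is an independent set in the cycle graph on `ℤ/2nℤ` (where `i` and
`i+1` are adjacent): no two of its elements are adjacent. -/
def CycIndep (n : ℕ) (T : Finset (ZMod (2 * n))) : Prop :=
  ∀ p ∈ T, ∀ q ∈ T, q ≠ p + 1

/-- `S` contains no independent set of size `n - 1` of the cycle graph on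
`ℤ/2nℤ`. -/
def NoBigIndep (n : ℕ) (S : Finset (ZMod (2 * n))) : Prop :=
  ¬ ∃ T ⊆ S, T.card = n - 1 ∧ CycIndep n T

/-- `S` is a union of `n - 2` pairwise vertex-disjoint edges of the cycle
graph on `ℤ/2nℤ` (an edge is a pair `{i, i+1}`). -/
def IsDisjointEdgeUnion (n : ℕ) (S : Finset (ZMod (2 * n))) : Prop :=
  ∃ B : Finset (ZMod (2 * n)), B.card = n - 2 ∧
    (∀ i ∈ B, ∀ j ∈ B, i ≠ j →
      Disjoint ({i, i + 1} : Finset (ZMod (2 * n))) {j, j + 1}) ∧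
    S = B.biUnion (fun i => {i, i + 1})

namespace CycleAux

/-- `eFun N S u0 m = true` iff the vertex at position `m` (relative to base
point `u0`) is in `S` and sits at an even offset within its run. -/
def eFun (N : ℕ) (S : Finset (ZMod N)) (u0 : ZMod N) : ℕ → Bool
  | 0 => false
  | m + 1 => decide (u0 + ((m + 1 : ℕ) : ZMod N) ∈ S) && !eFun N S u0 m

/-- The elements of `S` at even offset in their run. -/
def ESet (n : ℕ) (S : Finset (ZMod (2 * n))) (u0 : ZMod (2 * n)) : Finset (ZMod (2 * n)) :=
  S.filter (fun x => eFun (2 * n) S u0 ((x - u0).val) = true)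

variable {n : ℕ}

lemma parity_flip (hn : 3 ≤ n) (z : ZMod (2 * n)) :
    Even ((z + 1).val) ↔ ¬ Even z.val := by
  haveI : NeZero (2 * n) := ⟨by omega⟩
  haveI : Fact (1 < 2 * n) := ⟨by omega⟩
  have h1 : (z + 1).val = (z.val + 1) % (2 * n) := by
    rw [ZMod.val_add, ZMod.val_one]
  have h2 : (z.val + 1) % (2 * n) % 2 = (z.val + 1) % 2 :=
    Nat.mod_mod_of_dvd _ ⟨n, rfl⟩
  rw [h1, Nat.even_iff, Nat.even_iff, h2]
  omega

lemma cycIndep_subset {T T' : Finset (ZMod (2 * n))} (h : T' ⊆ T) (hT : CycIndep n T) :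
    CycIndep n T' := fun p hp q hq => hT p (h hp) q (h hq)

lemma indep_card_le (hn : 3 ≤ n) {S T : Finset (ZMod (2 * n))}
    (hS : NoBigIndep n S) (hTS : T ⊆ S) (hT : CycIndep n T) : T.card ≤ n - 2 := by
  by_contra h
  have h1 : n - 1 ≤ T.card := by omega
  obtain ⟨T', hT'T, hc⟩ := Finset.exists_subset_card_eq h1
  exact hS ⟨T', hT'T.trans hTS, hc, cycIndep_subset hT'T hT⟩

lemma exists_not_mem (hn : 3 ≤ n) {S : Finset (ZMod (2 * n))} (hS : NoBigIndep n S) :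
    ∃ u0, u0 ∉ S := by
  by_contra h
  push_neg at h
  set W := (Finset.range (n - 1)).image (fun k => ((2 * k : ℕ) : ZMod (2 * n))) with hW
  have hinj : ∀ k ∈ Finset.range (n - 1), ∀ k' ∈ Finset.range (n - 1),
      ((2 * k : ℕ) : ZMod (2 * n)) = ((2 * k' : ℕ) : ZMod (2 * n)) → k = k' := by
    intro k hk k' hk' he
    rw [Finset.mem_range] at hk hk'
    have := congrArg ZMod.val he
    rw [ZMod.val_cast_of_lt (by omega), ZMod.val_cast_of_lt (by omega)] at this
    omega
  have hcard : W.card = n - 1 := by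
    rw [hW, Finset.card_image_of_injOn hinj, Finset.card_range]
  have hind : CycIndep n W := by
    intro p hp q hq hpq
    rw [hW, Finset.mem_image] at hp hq
    obtain ⟨k, hk, rfl⟩ := hp
    obtain ⟨k', hk', rfl⟩ := hq
    rw [Finset.mem_range] at hk hk'
    have h2 : ((2 * k' : ℕ) : ZMod (2 * n)) = ((2 * k + 1 : ℕ) : ZMod (2 * n)) := by
      push_cast
      push_cast at hpq
      rw [hpq]
    have := congrArg ZMod.val h2
    rw [ZMod.val_cast_of_lt (by omega), ZMod.val_cast_of_lt (by omega)] at this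
    omega
  exact hS ⟨W, fun x _ => h x, hcard, hind⟩

lemma base_eq (hn : 3 ≤ n) (x u0 : ZMod (2 * n)) :
    u0 + (((x - u0).val : ℕ) : ZMod (2 * n)) = x := by
  haveI : NeZero (2 * n) := ⟨by omega⟩
  rw [show (((x - u0).val : ℕ) : ZMod (2 * n)) = x - u0 from ZMod.natCast_rightInverse _]
  ring

lemma eFun_spec (N : ℕ) (S : Finset (ZMod N)) (u0 : ZMod N) (m : ℕ) :
    eFun N S u0 (m + 1) = true ↔
      ((u0 + ((m + 1 : ℕ) : ZMod N) ∈ S) ∧ eFun N S u0 m = false) := by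
  simp [eFun]

lemma eFun_mem {N : ℕ} {S : Finset (ZMod N)} {u0 : ZMod N} {m : ℕ}
    (h : eFun N S u0 m = true) : u0 + (m : ZMod N) ∈ S ∧ m ≠ 0 := by
  cases m with
  | zero => simp [eFun] at h
  | succ k =>
    rw [eFun_spec] at h
    exact ⟨h.1, by omega⟩

lemma pos_ne_zero (hn : 3 ≤ n) {S : Finset (ZMod (2 * n))} {u0 x : ZMod (2 * n)}
    (hu0 : u0 ∉ S) (hx : x ∈ S) : (x - u0).val ≠ 0 := by
  haveI : NeZero (2 * n) := ⟨by omega⟩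
  intro h
  have h1 : x - u0 = 0 := (ZMod.val_eq_zero _).mp h
  rw [sub_eq_zero] at h1
  exact hu0 (h1 ▸ hx)

lemma pos_succ (hn : 3 ≤ n) {u0 x : ZMod (2 * n)} (hne : x + 1 ≠ u0) :
    (x + 1 - u0).val = (x - u0).val + 1 := by
  haveI : NeZero (2 * n) := ⟨by omega⟩
  haveI : Fact (1 < 2 * n) := ⟨by omega⟩
  have hlt : (x - u0).val < 2 * n := ZMod.val_lt _
  have hne' : (x - u0).val ≠ 2 * n - 1 := by
    intro h
    apply hne
    have e1 : x + 1 - u0 = (((x - u0).val : ℕ) : ZMod (2 * n)) + 1 := by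
      rw [show (((x - u0).val : ℕ) : ZMod (2 * n)) = x - u0 from ZMod.natCast_rightInverse _]
      ring
    rw [h] at e1
    have e2 : ((2 * n - 1 : ℕ) : ZMod (2 * n)) + 1 = 0 := by
      have h3 : ((2 * n - 1 : ℕ) + 1 : ℕ) = 2 * n := by omega
      calc ((2 * n - 1 : ℕ) : ZMod (2 * n)) + 1
          = (((2 * n - 1 : ℕ) + 1 : ℕ) : ZMod (2 * n)) := by push_cast; ring
        _ = ((2 * n : ℕ) : ZMod (2 * n)) := by rw [h3]
        _ = 0 := ZMod.natCast_self _
    rw [e2] at e1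
    rw [sub_eq_zero] at e1
    exact e1
  have e3 : x + 1 - u0 = (x - u0) + 1 := by ring
  rw [e3, ZMod.val_add, ZMod.val_one, Nat.mod_eq_of_lt (by omega)]

lemma mem_ESet {S : Finset (ZMod (2 * n))} {u0 x : ZMod (2 * n)} :
    x ∈ ESet n S u0 ↔ x ∈ S ∧ eFun (2 * n) S u0 ((x - u0).val) = true :=
  Finset.mem_filter

lemma pred_mem (hn : 3 ≤ n) {S : Finset (ZMod (2 * n))} {u0 x : ZMod (2 * n)}
    (hu0 : u0 ∉ S) (hx : x ∈ S)
    (hxe : eFun (2 * n) S u0 ((x - u0).val) = false) :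
    x - 1 ∈ ESet n S u0 := by
  haveI : NeZero (2 * n) := ⟨by omega⟩
  obtain ⟨m, hm⟩ : ∃ m, (x - u0).val = m + 1 :=
    ⟨(x - u0).val - 1, by have := pos_ne_zero hn hu0 hx; omega⟩
  have hmlt : m + 1 < 2 * n := by rw [← hm]; exact ZMod.val_lt _
  rw [hm] at hxe
  have hpx : u0 + ((m + 1 : ℕ) : ZMod (2 * n)) = x := by
    rw [← hm]; exact base_eq hn x u0
  have hmem : u0 + ((m + 1 : ℕ) : ZMod (2 * n)) ∈ S := hpx ▸ hx
  have hem : eFun (2 * n) S u0 m = true := by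
    by_contra hem
    have hem' : eFun (2 * n) S u0 m = false := by
      revert hem; cases eFun (2 * n) S u0 m <;> simp
    have : eFun (2 * n) S u0 (m + 1) = true := (eFun_spec _ _ _ _).mpr ⟨hmem, hem'⟩
    rw [this] at hxe
    exact absurd hxe (by simp)
  have hy := eFun_mem hem
  have hxy : x - 1 = u0 + ((m : ℕ) : ZMod (2 * n)) := by
    rw [← hpx]; push_cast; ring
  rw [mem_ESet, hxy]
  refine ⟨hy.1, ?_⟩
  have hval : ((u0 + ((m : ℕ) : ZMod (2 * n))) - u0).val = m := by
    have h4 : (u0 + ((m : ℕ) : ZMod (2 * n))) - u0 = ((m : ℕ) : ZMod (2 * n)) := by ring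
    rw [h4, ZMod.val_cast_of_lt (by omega)]
  rw [hval]
  exact hem

lemma ESet_indep (hn : 3 ≤ n) {S : Finset (ZMod (2 * n))} {u0 : ZMod (2 * n)}
    (hu0 : u0 ∉ S) : CycIndep n (ESet n S u0) := by
  intro p hp q hq hqp
  rw [mem_ESet] at hp hq
  have hqu : q ≠ u0 := fun h => hu0 (h ▸ hq.1)
  have hq1 : (q - u0).val = (p - u0).val + 1 := by
    rw [hqp]
    exact pos_succ hn (by rw [← hqp]; exact hqu)
  have h2 := hq.2
  rw [hq1, eFun_spec] at h2
  rw [hp.2] at h2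
  exact absurd h2.2 (by simp)

lemma card_le_ESet (hn : 3 ≤ n) {S : Finset (ZMod (2 * n))} {u0 : ZMod (2 * n)}
    (hu0 : u0 ∉ S) {T : Finset (ZMod (2 * n))} (hT : CycIndep n T) (hTS : T ⊆ S) :
    T.card ≤ (ESet n S u0).card := by
  classical
  apply Finset.card_le_card_of_injOn
    (fun t => if eFun (2 * n) S u0 ((t - u0).val) = true then t else t - 1)
  · intro t ht
    dsimp only
    by_cases h : eFun (2 * n) S u0 ((t - u0).val) = true
    · rw [if_pos h]; exact mem_ESet.mpr ⟨hTS ht, h⟩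
    · rw [if_neg h]
      exact pred_mem hn hu0 (hTS ht)
        (by revert h; cases eFun (2 * n) S u0 ((t - u0).val) <;> simp)
  · intro t ht t' ht' heq
    dsimp only at heq
    by_cases h1 : eFun (2 * n) S u0 ((t - u0).val) = true <;>
      by_cases h2 : eFun (2 * n) S u0 ((t' - u0).val) = true
    · rwa [if_pos h1, if_pos h2] at heq
    · rw [if_pos h1, if_neg h2] at heq
      exact absurd (by rw [heq]; ring) (hT t ht t' ht')
    · rw [if_neg h1, if_pos h2] at heq
      exact absurd (by rw [← heq]; ring) (hT t' ht' t ht)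
    · rw [if_neg h1, if_neg h2] at heq
      exact sub_left_injective heq

lemma card_le_ESet_insert (hn : 3 ≤ n) {S : Finset (ZMod (2 * n))} {u0 v : ZMod (2 * n)}
    (hu0 : u0 ∉ S) (hv : v ∉ S) {y : ZMod (2 * n)} (hy : y ∈ ESet n S u0)
    (hvy : v = y + 1) {T : Finset (ZMod (2 * n))} (hT : CycIndep n T)
    (hTS : T ⊆ insert v S) :
    T.card ≤ (ESet n S u0).card := by
  classical
  apply Finset.card_le_card_of_injOn
    (fun t => if t = v then y else
      (if eFun (2 * n) S u0 ((t - u0).val) = true then t else t - 1))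
  · intro t ht
    dsimp only
    by_cases htv : t = v
    · rw [if_pos htv]; exact hy
    · rw [if_neg htv]
      have htS : t ∈ S := by
        rcases Finset.mem_insert.mp (hTS ht) with h | h
        · exact absurd h htv
        · exact h
      by_cases h : eFun (2 * n) S u0 ((t - u0).val) = true
      · rw [if_pos h]; exact mem_ESet.mpr ⟨htS, h⟩
      · rw [if_neg h]
        exact pred_mem hn hu0 htS
          (by revert h; cases eFun (2 * n) S u0 ((t - u0).val) <;> simp)
  · intro t ht t' ht' heq
    dsimp only at heq
    have key : ∀ a ∈ T, a ≠ v → a ∈ S := by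
      intro a ha hav
      rcases Finset.mem_insert.mp (hTS ha) with h | h
      · exact absurd h hav
      · exact h
    by_cases htv : t = v <;> by_cases htv' : t' = v
    · rw [htv, htv']
    · exfalso
      rw [if_pos htv, if_neg htv'] at heq
      by_cases h2 : eFun (2 * n) S u0 ((t' - u0).val) = true
      · rw [if_pos h2] at heq
        -- heq : y = t', and t = v = y + 1 = t' + 1 ∈ T: contradiction
        exact (hT t' ht' t ht) (by rw [htv, hvy, heq])
      · rw [if_neg h2] at heq
        -- heq : y = t' - 1 so t' = y + 1 = v
        exact htv' (by rw [hvy, heq]; ring)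
    · exfalso
      rw [if_neg htv, if_pos htv'] at heq
      by_cases h1 : eFun (2 * n) S u0 ((t - u0).val) = true
      · rw [if_pos h1] at heq
        exact (hT t ht t' ht') (by rw [htv', hvy, ← heq])
      · rw [if_neg h1] at heq
        exact htv (by rw [hvy, ← heq]; ring)
    · rw [if_neg htv, if_neg htv'] at heq
      by_cases h1 : eFun (2 * n) S u0 ((t - u0).val) = true <;>
        by_cases h2 : eFun (2 * n) S u0 ((t' - u0).val) = true
      · rwa [if_pos h1, if_pos h2] at heq
      · rw [if_pos h1, if_neg h2] at heq
        exact absurd (by rw [heq]; ring) (hT t ht t' ht')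
      · rw [if_neg h1, if_pos h2] at heq
        exact absurd (by rw [← heq]; ring) (hT t' ht' t ht)
      · rw [if_neg h1, if_neg h2] at heq
        exact sub_left_injective heq

lemma card_le_ESet_insert_any (hn : 3 ≤ n) {S : Finset (ZMod (2 * n))}
    {u0 v : ZMod (2 * n)} (hu0 : u0 ∉ S) {T : Finset (ZMod (2 * n))}
    (hT : CycIndep n T) (hTS : T ⊆ insert v S) :
    T.card ≤ (ESet n S u0).card + 1 := by
  classical
  by_cases hvT : v ∈ T
  · have h1 : T.erase v ⊆ S := by
      intro t ht
      have hmem := Finset.mem_of_mem_erase ht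
      have hne := Finset.ne_of_mem_erase ht
      rcases Finset.mem_insert.mp (hTS hmem) with h | h
      · exact absurd h hne
      · exact h
    have h2 := card_le_ESet hn hu0 (cycIndep_subset (Finset.erase_subset _ _) hT) h1
    have h3 := Finset.card_erase_of_mem hvT
    have h4 : 1 ≤ T.card := Finset.card_pos.mpr ⟨v, hvT⟩
    omega
  · have h1 : T ⊆ S := by
      intro t ht
      rcases Finset.mem_insert.mp (hTS ht) with h | h
      · exact absurd (h ▸ ht) hvT
      · exact h
    have := card_le_ESet hn hu0 hT h1
    omega

lemma card_S_le (hn : 3 ≤ n) {S : Finset (ZMod (2 * n))} {u0 : ZMod (2 * n)}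
    (hu0 : u0 ∉ S) : S.card ≤ 2 * (ESet n S u0).card := by
  classical
  have hsub : ESet n S u0 ⊆ S := Finset.filter_subset _ _
  have h1 : (S \ ESet n S u0).card ≤ (ESet n S u0).card := by
    apply Finset.card_le_card_of_injOn (fun x => x - 1)
    · intro x hx
      rw [Finset.mem_coe, Finset.mem_sdiff] at hx
      have he : eFun (2 * n) S u0 ((x - u0).val) = false := by
        have := hx.2
        rw [mem_ESet] at this
        push_neg at this
        have h2 := this hx.1
        revert h2; cases eFun (2 * n) S u0 ((x - u0).val) <;> simp
      exact pred_mem hn hu0 hx.1 he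
    · intro a _ b _ h
      exact sub_left_injective h
  have := Finset.card_sdiff_add_card_eq_card hsub
  omega

lemma two_mul_le_card (hn : 3 ≤ n) {S : Finset (ZMod (2 * n))} {u0 : ZMod (2 * n)}
    (hu0 : u0 ∉ S) (h : ∀ y ∈ ESet n S u0, y + 1 ∈ S) :
    2 * (ESet n S u0).card ≤ S.card := by
  classical
  have h1 : (ESet n S u0).card ≤ (S \ ESet n S u0).card := by
    apply Finset.card_le_card_of_injOn (fun y => y + 1)
    · intro y hy
      rw [Finset.mem_coe, Finset.mem_sdiff]
      exact ⟨h y hy, fun hc => (ESet_indep hn hu0 y hy (y + 1) hc) rfl⟩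
    · intro a _ b _ hab
      exact add_left_injective 1 hab
  have hsub : ESet n S u0 ⊆ S := Finset.filter_subset _ _
  have := Finset.card_sdiff_add_card_eq_card hsub
  omega

lemma maximal_to_union (hn : 3 ≤ n) (S : Finset (ZMod (2 * n)))
    (h1 : NoBigIndep n S) (h2 : ∀ S', NoBigIndep n S' → S ⊆ S' → S = S') :
    IsDisjointEdgeUnion n S := by
  haveI : NeZero (2 * n) := ⟨by omega⟩
  haveI : Fact (1 < 2 * n) := ⟨by omega⟩
  obtain ⟨u0, hu0⟩ := exists_not_mem hn h1
  have hES : ESet n S u0 ⊆ S := Finset.filter_subset _ _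
  have hEind : CycIndep n (ESet n S u0) := ESet_indep hn hu0
  have hE2 : (ESet n S u0).card ≤ n - 2 := indep_card_le hn h1 hES hEind
  have h5 : ∀ y ∈ ESet n S u0, y + 1 ∈ S := by
    intro y hy
    by_contra hv
    have hNB : NoBigIndep n (insert (y + 1) S) := by
      rintro ⟨T, hTS, hc, hind⟩
      have := card_le_ESet_insert hn hu0 hv hy rfl hind hTS
      omega
    have heq := h2 _ hNB (Finset.subset_insert _ _)
    apply hv
    rw [heq]
    exact Finset.mem_insert_self _ _
  have hEcard : (ESet n S u0).card = n - 2 := by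
    by_contra hc
    have hNB : NoBigIndep n (insert u0 S) := by
      rintro ⟨T, hTS, hcT, hind⟩
      have := card_le_ESet_insert_any hn hu0 hind hTS
      omega
    have heq := h2 _ hNB (Finset.subset_insert _ _)
    apply hu0
    rw [heq]
    exact Finset.mem_insert_self _ _
  have hdisj : ∀ i ∈ ESet n S u0, ∀ j ∈ ESet n S u0, i ≠ j →
      Disjoint ({i, i + 1} : Finset (ZMod (2 * n))) {j, j + 1} := by
    intro i hi j hj hij
    rw [Finset.disjoint_left]
    intro a ha haj
    simp only [Finset.mem_insert, Finset.mem_singleton] at ha haj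
    have hiE1 : i + 1 ∉ ESet n S u0 := fun hc => (hEind i hi (i + 1) hc) rfl
    have hjE1 : j + 1 ∉ ESet n S u0 := fun hc => (hEind j hj (j + 1) hc) rfl
    rcases ha with rfl | rfl <;> rcases haj with h | h
    · exact hij h
    · rw [h] at hi; exact hjE1 hi
    · rw [h] at hiE1; exact hiE1 hj
    · exact hij (add_right_cancel h)
  have hcard2 : S.card = 2 * (ESet n S u0).card :=
    le_antisymm (card_S_le hn hu0) (two_mul_le_card hn hu0 h5)
  refine ⟨ESet n S u0, hEcard, hdisj, ?_⟩
  have hsub : (ESet n S u0).biUnion (fun i => ({i, i + 1} : Finset (ZMod (2 * n)))) ⊆ S := by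
    intro x hx
    rw [Finset.mem_biUnion] at hx
    obtain ⟨i, hi, hxi⟩ := hx
    simp only [Finset.mem_insert, Finset.mem_singleton] at hxi
    rcases hxi with rfl | rfl
    · exact hES hi
    · exact h5 i hi
  have hbcard : ((ESet n S u0).biUnion
      (fun i => ({i, i + 1} : Finset (ZMod (2 * n))))).card = 2 * (ESet n S u0).card := by
    rw [Finset.card_biUnion hdisj]
    have hpair : ∀ i ∈ ESet n S u0, ({i, i + 1} : Finset (ZMod (2 * n))).card = 2 := by
      intro i _
      rw [Finset.card_insert_of_notMem, Finset.card_singleton]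
      simp only [Finset.mem_singleton]
      intro hc
      have h0 : i + 0 = i + 1 := by rw [add_zero]; exact hc
      exact zero_ne_one (add_left_cancel h0)
    rw [Finset.sum_congr rfl hpair, Finset.sum_const, smul_eq_mul]
    ring
  exact (Finset.eq_of_subset_of_card_le hsub (by omega)).symm

lemma union_noBig (hn : 3 ≤ n) (S : Finset (ZMod (2 * n)))
    (h : IsDisjointEdgeUnion n S) : NoBigIndep n S := by
  classical
  obtain ⟨B, hB, hdis, rfl⟩ := h
  rintro ⟨T, hTS, hc, hind⟩
  have hmap : T.card ≤ B.card := by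
    apply Finset.card_le_card_of_injOn
      (fun t => if h : ∃ i, i ∈ B ∧ t ∈ ({i, i + 1} : Finset (ZMod (2 * n)))
        then h.choose else 0)
    · intro t ht
      have hex : ∃ i, i ∈ B ∧ t ∈ ({i, i + 1} : Finset (ZMod (2 * n))) := by
        have := hTS ht
        rw [Finset.mem_biUnion] at this
        obtain ⟨i, hi, hti⟩ := this
        exact ⟨i, hi, hti⟩
      dsimp only
      rw [dif_pos hex]
      exact hex.choose_spec.1
    · intro t ht t' ht' heq
      dsimp only at heq
      have hex : ∃ i, i ∈ B ∧ t ∈ ({i, i + 1} : Finset (ZMod (2 * n))) := by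
        have := hTS ht
        rw [Finset.mem_biUnion] at this
        obtain ⟨i, hi, hti⟩ := this
        exact ⟨i, hi, hti⟩
      have hex' : ∃ i, i ∈ B ∧ t' ∈ ({i, i + 1} : Finset (ZMod (2 * n))) := by
        have := hTS ht'
        rw [Finset.mem_biUnion] at this
        obtain ⟨i, hi, hti⟩ := this
        exact ⟨i, hi, hti⟩
      rw [dif_pos hex, dif_pos hex'] at heq
      have s1 := hex.choose_spec.2
      have s2 := hex'.choose_spec.2
      rw [← heq] at s2
      simp only [Finset.mem_insert, Finset.mem_singleton] at s1 s2
      by_contra hne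
      rcases s1 with h1 | h1 <;> rcases s2 with h2 | h2
      · exact hne (h1.trans h2.symm)
      · exact (hind t ht t' ht') (by rw [h2, ← h1])
      · exact (hind t' ht' t ht) (by rw [h1, ← h2])
      · exact hne (by rw [h1, h2])
  omega

lemma union_card (hn : 3 ≤ n) (S : Finset (ZMod (2 * n)))
    (h : IsDisjointEdgeUnion n S) : S.card = 2 * n - 4 := by
  haveI : Fact (1 < 2 * n) := ⟨by omega⟩
  obtain ⟨B, hB, hdis, rfl⟩ := h
  rw [Finset.card_biUnion hdis]
  have hpair : ∀ i ∈ B, ({i, i + 1} : Finset (ZMod (2 * n))).card = 2 := by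
    intro i _
    rw [Finset.card_insert_of_notMem, Finset.card_singleton]
    simp only [Finset.mem_singleton]
    intro hc
    have h0 : i + 0 = i + 1 := by rw [add_zero]; exact hc
    exact zero_ne_one (add_left_cancel h0)
  rw [Finset.sum_congr rfl hpair, Finset.sum_const, smul_eq_mul, hB]
  omega

lemma union_maximal (hn : 3 ≤ n) (S : Finset (ZMod (2 * n)))
    (h : IsDisjointEdgeUnion n S) :
    ∀ S', NoBigIndep n S' → S ⊆ S' → S = S' := by
  classical
  haveI : NeZero (2 * n) := ⟨by omega⟩
  intro S' hS' hsub
  by_contra hne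
  obtain ⟨v, hvS', hvS⟩ := Finset.exists_of_ssubset (lt_of_le_of_ne hsub hne)
  obtain ⟨B, hB, hdis, hSdef⟩ := h
  set c : ZMod (2 * n) → ZMod (2 * n) :=
    fun i => if Even ((i - v).val) then i else i + 1 with hcdef
  have hcmem : ∀ i, c i ∈ ({i, i + 1} : Finset (ZMod (2 * n))) := by
    intro i
    rw [hcdef]
    dsimp only
    split <;> simp
  have hceven : ∀ i, Even ((c i - v).val) := by
    intro i
    rw [hcdef]
    dsimp only
    by_cases h : Even ((i - v).val)
    · rw [if_pos h]; exact h
    · rw [if_neg h]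
      have he : i + 1 - v = (i - v) + 1 := by ring
      rw [he]
      exact (parity_flip hn _).mpr h
  have hcS : ∀ i ∈ B, c i ∈ S := by
    intro i hi
    rw [hSdef, Finset.mem_biUnion]
    exact ⟨i, hi, hcmem i⟩
  have hvim : v ∉ B.image c := by
    rw [Finset.mem_image]
    rintro ⟨i, hi, hciv⟩
    exact hvS (hciv ▸ hcS i hi)
  have hinj : Set.InjOn c B := by
    intro i hi j hj heq
    by_contra hij
    have hd := hdis i hi j hj hij
    apply Finset.disjoint_left.mp hd (hcmem i)
    rw [heq]
    exact hcmem j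
  have hTcard : (insert v (B.image c)).card = n - 1 := by
    rw [Finset.card_insert_of_notMem hvim, Finset.card_image_of_injOn hinj, hB]
    omega
  have hTind : CycIndep n (insert v (B.image c)) := by
    intro p hp q hq hqp
    have hev : ∀ a ∈ insert v (B.image c), Even ((a - v).val) := by
      intro a ha
      rcases Finset.mem_insert.mp ha with rfl | ha
      · rw [sub_self, ZMod.val_zero]
        exact ⟨0, rfl⟩
      · rw [Finset.mem_image] at ha
        obtain ⟨i, _, rfl⟩ := ha
        exact hceven i
    have hep := hev p hp
    have heq := hev q hq
    have h3 : q - v = (p - v) + 1 := by rw [hqp]; ring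
    rw [h3] at heq
    exact ((parity_flip hn _).mp heq) hep
  apply hS'
  refine ⟨insert v (B.image c), ?_, hTcard, hTind⟩
  apply Finset.insert_subset hvS'
  intro x hx
  rw [Finset.mem_image] at hx
  obtain ⟨i, hi, rfl⟩ := hx
  exact hsub (hcS i hi)

end CycleAux

theorem maximal_noBigIndep_iff_edgeUnion (n : ℕ) (hn : 3 ≤ n) :
    (∀ S : Finset (ZMod (2 * n)),
      (NoBigIndep n S ∧ ∀ S', NoBigIndep n S' → S ⊆ S' → S = S') ↔
        IsDisjointEdgeUnion n S) ∧
    (∀ S : Finset (ZMod (2 * n)),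
      (NoBigIndep n S ∧ ∀ S', NoBigIndep n S' → S ⊆ S' → S = S') →
        S.card = 2 * n - 4) := by
  constructor
  · intro S
    constructor
    · rintro ⟨h1, h2⟩
      exact CycleAux.maximal_to_union hn S h1 h2
    · intro h
      exact ⟨CycleAux.union_noBig hn S h, CycleAux.union_maximal hn S h⟩
  · intro S hS
    exact CycleAux.union_card hn S (CycleAux.maximal_to_union hn S hS.1 hS.2)
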